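/- arXiv:2003.04433 — 8 statements merged into one kernel-verified Lean document; each statement's English description precedes it below -/
import Mathlib

section
/- Let X₁, …, Xₙ ∈ ℝ^d and define Q := {(ψ(X₁),…,ψ(Xₙ)) : ψ : ℝ^d → ℝ quasiconvex and decreasing}. Then z ∈ Q if and only if z_i ≤ max_{j∈S} z_j for every pair (i, S) with i ∈ [n], S ⊆ [n] nonempty, such that X_i ∈ Cv†({X_j : j ∈ S}). -/
open Finset MeasureTheory

/-- Upper orthant of a set `A ⊆ ℝ^d`. -/
def UpOrth {d : ℕ} (A : Set (Fin d → ℝ)) : Set (Fin d → ℝ) :=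
  {y | ∃ x ∈ A, x ≤ y}

/-- Upper orthant of the convex hull. -/
def CvDag {d : ℕ} (A : Set (Fin d → ℝ)) : Set (Fin d → ℝ) :=
  UpOrth (convexHull ℝ A)

/-- Quasiconvexity: all lower level sets are convex. -/
def QConv {d : ℕ} (ψ : (Fin d → ℝ) → ℝ) : Prop :=
  ∀ α : ℝ, Convex ℝ {x : Fin d → ℝ | ψ x ≤ α}

/-- Coordinatewise decreasing. -/
def Decr {d : ℕ} (ψ : (Fin d → ℝ) → ℝ) : Prop :=
  ∀ x y : Fin d → ℝ, x ≤ y → ψ y ≤ ψ x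

lemma cvDag_convex {d : ℕ} (A : Set (Fin d → ℝ)) : Convex ℝ (CvDag A) := by
  rintro y₁ ⟨x₁, hx₁, hl₁⟩ y₂ ⟨x₂, hx₂, hl₂⟩ a b ha hb hab
  refine ⟨a • x₁ + b • x₂, (convex_convexHull ℝ A) hx₁ hx₂ ha hb hab, fun k => ?_⟩
  simp only [Pi.add_apply, Pi.smul_apply, smul_eq_mul]
  exact add_le_add (mul_le_mul_of_nonneg_left (hl₁ k) ha)
    (mul_le_mul_of_nonneg_left (hl₂ k) hb)

lemma cvDag_mono {d : ℕ} {A B : Set (Fin d → ℝ)} (h : A ⊆ B) : CvDag A ⊆ CvDag B := by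
  rintro y ⟨x, hx, hle⟩
  exact ⟨x, convexHull_mono h hx, hle⟩

lemma cvDag_up {d : ℕ} {A : Set (Fin d → ℝ)} {x y : Fin d → ℝ}
    (hx : x ∈ CvDag A) (hxy : x ≤ y) : y ∈ CvDag A := by
  obtain ⟨w, hw, hwx⟩ := hx
  exact ⟨w, hw, hwx.trans hxy⟩

lemma mem_cvDag_self {d : ℕ} {A : Set (Fin d → ℝ)} {x : Fin d → ℝ} (hx : x ∈ A) :
    x ∈ CvDag A :=
  ⟨x, subset_convexHull ℝ A hx, le_refl x⟩

theorem stmt_6 (d n : ℕ) (X : Fin n → (Fin d → ℝ)) (z : Fin n → ℝ) :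
    (∃ ψ : (Fin d → ℝ) → ℝ, QConv ψ ∧ Decr ψ ∧ ∀ i, z i = ψ (X i)) ↔
    (∀ (i : Fin n) (S : Finset (Fin n)) (hS : S.Nonempty),
      X i ∈ CvDag (X '' ↑S) → z i ≤ S.sup' hS z) := by
  classical
  constructor
  · rintro ⟨ψ, hq, hd, hz⟩ i S hS hmem
    obtain ⟨y, hy, hyx⟩ := hmem
    set α : ℝ := S.sup' hS z with hα
    have hsub : X '' ↑S ⊆ {x : Fin d → ℝ | ψ x ≤ α} := by
      rintro _ ⟨j, hj, rfl⟩
      have : z j ≤ α := le_sup' z hj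
      simpa [hz j] using this
    have hy' : ψ y ≤ α := convexHull_min hsub (hq α) hy
    have := hd y (X i) hyx
    rw [hz i]
    linarith
  · intro H
    -- the constant used when no set applies
    set C : ℝ := ((insert (0:ℝ) (Finset.univ.image z)).max' (by simp)) + 1 with hC
    have hzC : ∀ j, z j < C := by
      intro j
      have : z j ≤ (insert (0:ℝ) (Finset.univ.image z)).max' (by simp) :=
        Finset.le_max' _ _ (by simp [Finset.mem_insert, Finset.mem_image])
      linarith
    set A : (Fin d → ℝ) → Finset (Fin n) :=
      fun x => Finset.univ.filter (fun j => x ∈ CvDag (X '' {k | z k ≤ z j})) with hA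
    set ψ : (Fin d → ℝ) → ℝ :=
      fun x => if h : (A x).Nonempty then ((A x).image z).min' (h.image z) else C with hψ
    have hψC : ∀ x, ψ x ≤ C := by
      intro x
      rw [hψ]
      by_cases h : (A x).Nonempty
      · simp only [h, dif_pos]
        obtain ⟨j, _, hj⟩ := Finset.mem_image.mp (Finset.min'_mem ((A x).image z) (h.image z))
        rw [← hj]
        exact (hzC j).le
      · simp [h]
    have hAmono : ∀ x y : Fin d → ℝ, x ≤ y → A x ⊆ A y := by
      intro x y hxy j hj
      rw [hA] at hj ⊢
      simp only [Finset.mem_filter, Finset.mem_univ, true_and] at hj ⊢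
      exact cvDag_up hj hxy
    -- key: ψ x ≤ α ↔ (∃ j, z j ≤ α ∧ x ∈ CvDag ...), for α < C
    have hlev : ∀ (α : ℝ) (x : Fin d → ℝ), α < C →
        (ψ x ≤ α ↔ ∃ j, z j ≤ α ∧ x ∈ CvDag (X '' {k | z k ≤ z j})) := by
      intro α x hαC
      constructor
      · intro hx
        rw [hψ] at hx
        by_cases h : (A x).Nonempty
        · simp only [h, dif_pos] at hx
          obtain ⟨j, hjA, hj⟩ := Finset.mem_image.mp (Finset.min'_mem ((A x).image z) (h.image z))
          refine ⟨j, by linarith [hj.symm ▸ hx], ?_⟩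
          rw [hA] at hjA
          simp only [Finset.mem_filter, Finset.mem_univ, true_and] at hjA
          exact hjA
        · simp only [h, dif_neg, not_false_iff] at hx
          linarith
      · rintro ⟨j, hjα, hjmem⟩
        have hjA : j ∈ A x := by
          rw [hA]; simp only [Finset.mem_filter, Finset.mem_univ, true_and]; exact hjmem
        have h : (A x).Nonempty := ⟨j, hjA⟩
        rw [hψ]
        simp only [h, dif_pos]
        exact le_trans (Finset.min'_le _ _ (Finset.mem_image_of_mem z hjA)) hjα
    refine ⟨ψ, ?_, ?_, ?_⟩
    · -- quasiconvex
      intro α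
      by_cases hαC : α < C
      · by_cases hS : ∃ j, z j ≤ α
        · have : {x : Fin d → ℝ | ψ x ≤ α} = CvDag (X '' {k | z k ≤ α}) := by
            ext x
            simp only [Set.mem_setOf_eq]
            rw [hlev α x hαC]
            constructor
            · rintro ⟨j, hjα, hjmem⟩
              exact cvDag_mono (Set.image_mono (f := X) (fun k hk => le_trans hk hjα)) hjmem
            · intro hx
              obtain ⟨j₀, hj₀⟩ := hS
              set T : Finset (Fin n) := Finset.univ.filter (fun k => z k ≤ α) with hT
              have hTne : T.Nonempty := ⟨j₀, by simp [hT, hj₀]⟩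
              obtain ⟨j, hjT, hjmax⟩ := T.exists_max_image z hTne
              have hjα : z j ≤ α := by
                rw [hT] at hjT; simpa using hjT
              refine ⟨j, hjα, ?_⟩
              refine cvDag_mono (Set.image_mono (f := X) ?_) hx
              intro k hk
              have : k ∈ T := by simp [hT]; exact hk
              exact hjmax k this
          rw [this]
          exact cvDag_convex _
        · have : {x : Fin d → ℝ | ψ x ≤ α} = ∅ := by
            ext x
            simp only [Set.mem_setOf_eq, Set.mem_empty_iff_false, iff_false]
            intro hx
            obtain ⟨j, hjα, _⟩ := (hlev α x hαC).mp hx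
            exact hS ⟨j, hjα⟩
          rw [this]
          exact convex_empty
      · have : {x : Fin d → ℝ | ψ x ≤ α} = Set.univ := by
          ext x
          simp only [Set.mem_setOf_eq, Set.mem_univ, iff_true]
          exact le_trans (hψC x) (not_lt.mp hαC)
        rw [this]
        exact convex_univ
    · -- decreasing
      intro x y hxy
      by_cases h : (A x).Nonempty
      · have h' : (A y).Nonempty := h.mono (hAmono x y hxy)
        rw [hψ]
        simp only [h, h', dif_pos]
        exact Finset.min'_subset _ (Finset.image_subset_image (hAmono x y hxy))
      · have : ψ x = C := by rw [hψ]; simp [h]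
        rw [this]
        exact hψC y
    · -- ψ (X i) = z i
      intro i
      have hle : ψ (X i) ≤ z i := by
        rw [hψ]
        have hiA : i ∈ A (X i) := by
          rw [hA]
          simp only [Finset.mem_filter, Finset.mem_univ, true_and]
          exact mem_cvDag_self ⟨i, le_refl (z i), rfl⟩
        have h : (A (X i)).Nonempty := ⟨i, hiA⟩
        simp only [h, dif_pos]
        exact Finset.min'_le _ _ (Finset.mem_image_of_mem z hiA)
      have hge : z i ≤ ψ (X i) := by
        have hxC : ψ (X i) < C := lt_of_le_of_lt hle (hzC i)
        obtain ⟨j, hjle, hjmem⟩ := (hlev (ψ (X i)) (X i) hxC).mp le_rfl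
        set S : Finset (Fin n) := Finset.univ.filter (fun k => z k ≤ z j) with hS
        have hSne : S.Nonempty := ⟨j, by simp [hS]⟩
        have hmem : X i ∈ CvDag (X '' ↑S) := by
          have : (↑S : Set (Fin n)) = {k | z k ≤ z j} := by
            ext k; simp [hS]
          rw [this]
          exact hjmem
        have := H i S hSne hmem
        have hsup : S.sup' hSne z ≤ z j := by
          apply Finset.sup'_le
          intro k hk
          rw [hS] at hk
          simpa using hk
        linarith
      linarith
end

section
/- Let X₁, …, Xₙ ∈ ℝ^d and define Q̃ := {(ψ(X₁),…,ψ(Xₙ)) : ψ : ℝ^d → ℝ quasiconvex}. Then z ∈ Q̃ if and only if z_i ≤ max_{j∈S} z_j for every pair (i, S) with i ∈ [n], S ⊆ [n] nonempty, such that X_i ∈ Cv({X_j : j ∈ S}). -/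
open Finset MeasureTheory

theorem stmt_7 (d n : ℕ) (X : Fin n → (Fin d → ℝ)) (z : Fin n → ℝ) :
    (∃ ψ : (Fin d → ℝ) → ℝ, QConv ψ ∧ ∀ i, z i = ψ (X i)) ↔
    (∀ (i : Fin n) (S : Finset (Fin n)) (hS : S.Nonempty),
      X i ∈ convexHull ℝ (X '' ↑S) → z i ≤ S.sup' hS z) := by
  classical
  constructor
  · rintro ⟨ψ, hψ, hz⟩ i S hS hX
    have hsub : X '' ↑S ⊆ {x | ψ x ≤ S.sup' hS z} := by
      rintro _ ⟨j, hj, rfl⟩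
      simp only [Set.mem_setOf_eq]
      rw [← hz j]
      exact Finset.le_sup' z (Finset.mem_coe.mp hj)
    have h2 := convexHull_min hsub (hψ (S.sup' hS z)) hX
    rw [hz i]
    exact h2
  · intro H
    set M : ℝ := ∑ j, |z j| with hM
    have hzM : ∀ i, z i ≤ M := fun i =>
      (le_abs_self _).trans (Finset.single_le_sum (f := fun j => |z j|)
        (fun j _ => abs_nonneg _) (Finset.mem_univ i))
    set F : (Fin d → ℝ) → Finset (Fin n) := fun x =>
      Finset.univ.filter (fun i => x ∈ convexHull ℝ (X '' {j | z j ≤ z i})) with hF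
    set ψ : (Fin d → ℝ) → ℝ := fun x =>
      if h : (F x).Nonempty then (F x).inf' h z else M + 1 with hψ
    have hmemF : ∀ x i, i ∈ F x ↔ x ∈ convexHull ℝ (X '' {j | z j ≤ z i}) := by
      intro x i
      simp [hF]
    refine ⟨ψ, ?_, ?_⟩
    · intro α
      rcases lt_or_ge α (M + 1) with hα | hα
      · have hset : {x | ψ x ≤ α} = convexHull ℝ (X '' {j | z j ≤ α}) := by
          ext x
          simp only [Set.mem_setOf_eq]
          constructor
          · intro hx
            by_cases h : (F x).Nonempty
            · obtain ⟨i₀, hi₀, hval⟩ := (F x).exists_mem_eq_inf' h z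
              have hx' : x ∈ convexHull ℝ (X '' {j | z j ≤ z i₀}) := (hmemF x i₀).mp hi₀
              have hle : z i₀ ≤ α := by
                rw [hψ] at hx
                simp only [dif_pos h] at hx
                rw [hval] at hx
                exact hx
              refine convexHull_mono ?_ hx'
              rintro _ ⟨j, hj, rfl⟩
              exact ⟨j, le_trans hj hle, rfl⟩
            · exfalso
              rw [hψ] at hx
              simp only [dif_neg h] at hx
              linarith
          · intro hx
            have hne : {j | z j ≤ α}.Nonempty := by
              by_contra hemp
              rw [Set.not_nonempty_iff_eq_empty] at hemp
              rw [hemp] at hx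
              simp at hx
            set T : Finset (Fin n) := Finset.univ.filter (fun j => z j ≤ α) with hT
            have hTne : T.Nonempty := by
              obtain ⟨j, hj⟩ := hne
              exact ⟨j, by simp [hT]; exact hj⟩
            obtain ⟨i₁, hi₁, hmax⟩ := T.exists_max_image z hTne
            have hi₁α : z i₁ ≤ α := by simpa [hT] using hi₁
            have hsub : {j | z j ≤ α} ⊆ {j | z j ≤ z i₁} := by
              intro j hj
              exact hmax j (by simp [hT]; exact hj)
            have hxF : i₁ ∈ F x :=
              (hmemF x i₁).mpr (convexHull_mono (Set.image_mono hsub) hx)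
            have hneF : (F x).Nonempty := ⟨i₁, hxF⟩
            rw [hψ]
            simp only [dif_pos hneF]
            exact le_trans (Finset.inf'_le z hxF) hi₁α
        rw [hset]
        exact convex_convexHull ℝ _
      · have hset : {x | ψ x ≤ α} = Set.univ := by
          ext x
          simp only [Set.mem_setOf_eq, Set.mem_univ, iff_true]
          rw [hψ]
          by_cases h : (F x).Nonempty
          · simp only [dif_pos h]
            obtain ⟨i₀, hi₀, hval⟩ := (F x).exists_mem_eq_inf' h z
            rw [hval]
            linarith [hzM i₀]
          · simp only [dif_neg h]
            exact hα
        rw [hset]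
        exact convex_univ
    · intro i
      have hmem : i ∈ F (X i) :=
        (hmemF (X i) i).mpr (subset_convexHull ℝ _ ⟨i, by simp, rfl⟩)
      have hne : (F (X i)).Nonempty := ⟨i, hmem⟩
      have h1 : ψ (X i) ≤ z i := by
        rw [hψ]
        simp only [dif_pos hne]
        exact Finset.inf'_le z hmem
      have h2 : z i ≤ ψ (X i) := by
        obtain ⟨i₀, hi₀, hval⟩ := (F (X i)).exists_mem_eq_inf' hne z
        have hx : X i ∈ convexHull ℝ (X '' {j | z j ≤ z i₀}) := (hmemF (X i) i₀).mp hi₀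
        set S : Finset (Fin n) := Finset.univ.filter (fun j => z j ≤ z i₀) with hS
        have hSne : S.Nonempty := ⟨i₀, by simp [hS]⟩
        have hcoe : (↑S : Set (Fin n)) = {j | z j ≤ z i₀} := by
          ext j; simp [hS]
        have hzi := H i S hSne (by rw [hcoe]; exact hx)
        have hsup : S.sup' hSne z ≤ z i₀ := by
          apply Finset.sup'_le
          intro j hj
          simpa [hS] using hj
        rw [hψ]
        simp only [dif_pos hne]
        rw [hval]
        exact le_trans hzi hsup
      linarith
end

section
/- (Secondary characterization, quasiconvex-only case.) Let X₁,…,Xₙ ∈ ℝ^d and Q̃ := {(ψ(X₁),…,ψ(Xₙ)) : ψ : ℝ^d → ℝ quasiconvex}. Then z ∈ Q̃ if and only if there exist vectors ξ₁,…,ξₙ ∈ ℝ^d such that ξ_jᵀ(X_i − X_j) > 0 whenever z_i < z_j. -/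
open Finset MeasureTheory

lemma clm_eq_sum {d : ℕ} (f : (Fin d → ℝ) →L[ℝ] ℝ) (y : Fin d → ℝ) :
    f y = ∑ k, y k * f (Pi.single k 1) := by
  have hy : y = ∑ k, (y k) • (Pi.single k 1 : Fin d → ℝ) := by
    funext l
    simp [Finset.sum_apply, Pi.single_apply, mul_comm]
  calc f y = f (∑ k, (y k) • (Pi.single k 1 : Fin d → ℝ)) := by rw [← hy]
    _ = ∑ k, y k * f (Pi.single k 1) := by
        rw [map_sum]; simp [smul_eq_mul]

theorem stmt_9 (d n : ℕ) (X : Fin n → (Fin d → ℝ)) (z : Fin n → ℝ) :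
    (∃ ψ : (Fin d → ℝ) → ℝ, QConv ψ ∧ ∀ i, z i = ψ (X i)) ↔
    (∃ ξ : Fin n → (Fin d → ℝ),
      ∀ i j, z i < z j → 0 < ∑ k, ξ j k * (X i k - X j k)) := by
  constructor
  · rintro ⟨ψ, hψ, hz⟩
    have key : ∀ j : Fin n, ∃ ξj : Fin d → ℝ,
        ∀ i, z i < z j → 0 < ∑ k, ξj k * (X i k - X j k) := by
      intro j
      set S : Set (Fin d → ℝ) := convexHull ℝ (X '' {i | z i < z j}) with hS
      have hSconv : Convex ℝ S := convex_convexHull _ _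
      have hSclosed : IsClosed S :=
        (Set.Finite.isCompact_convexHull ℝ (Set.toFinite _)).isClosed
      have hXj : X j ∉ S := by
        have hC : Convex ℝ {x | ψ x < ψ (X j)} := by
          intro x hx y hy a b ha hb hab
          have hmax : max (ψ x) (ψ y) < ψ (X j) := max_lt hx hy
          have hx' : x ∈ {w | ψ w ≤ max (ψ x) (ψ y)} := Set.mem_setOf_eq ▸ le_max_left (ψ x) (ψ y)
          have hy' : y ∈ {w | ψ w ≤ max (ψ x) (ψ y)} := Set.mem_setOf_eq ▸ le_max_right (ψ x) (ψ y)
          have hcc : ψ (a • x + b • y) ≤ max (ψ x) (ψ y) :=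
            hψ (max (ψ x) (ψ y)) hx' hy' ha hb hab
          exact lt_of_le_of_lt hcc hmax
        have hsub : S ⊆ {x | ψ x < ψ (X j)} := by
          apply convexHull_min _ hC
          rintro _ ⟨i, hi, rfl⟩
          simpa [← hz i, ← hz j] using hi
        intro h
        have h2 : ψ (X j) < ψ (X j) := hsub h
        exact lt_irrefl _ h2
      obtain ⟨f, u, hfu, hfS⟩ := geometric_hahn_banach_point_closed hSconv hSclosed hXj
      refine ⟨fun k => f (Pi.single k 1), fun i hi => ?_⟩
      have hXi : X i ∈ S := subset_convexHull _ _ ⟨i, hi, rfl⟩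
      have hlt : f (X j) < f (X i) := hfu.trans (hfS _ hXi)
      have hpos : (0 : ℝ) < f (X i - X j) := by
        rw [map_sub]; linarith
      calc (0:ℝ) < f (X i - X j) := hpos
        _ = ∑ k, (fun k => f (Pi.single k 1)) k * (X i k - X j k) := by
            rw [clm_eq_sum]
            exact Finset.sum_congr rfl fun k _ => by simp [mul_comm]
    choose ξ hξ using key
    exact ⟨ξ, fun i j => hξ j i⟩
  · rintro ⟨ξ, hξ⟩
    set m : ℝ := -∑ j, |z j| with hm
    have hmle : ∀ i, m ≤ z i := by
      intro i
      have h1 : |z i| ≤ ∑ j, |z j| :=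
        Finset.single_le_sum (f := fun j => |z j|) (fun j _ => abs_nonneg _) (mem_univ i)
      have h2 := neg_abs_le (z i)
      simp only [hm]; linarith
    set L : Fin n → (Fin d → ℝ) → ℝ := fun j x => ∑ k, ξ j k * (x k - X j k) with hL
    set F : Fin n → NNReal := fun j => Real.toNNReal (z j - m) with hF
    set T : (Fin d → ℝ) → Finset (Fin n) :=
      fun x => Finset.univ.filter (fun j => L j x ≤ 0) with hT
    set ψ : (Fin d → ℝ) → ℝ := fun x => (((T x).sup F : NNReal) : ℝ) + m with hψdef
    have hmono : ∀ x y : Fin d → ℝ, ∀ a b : ℝ, 0 ≤ a → 0 ≤ b → a + b = 1 →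
        T (a • x + b • y) ⊆ T x ∪ T y := by
      intro x y a b ha hb hab j hj
      simp only [hT, Finset.mem_filter, Finset.mem_union, Finset.mem_univ, true_and] at hj ⊢
      by_contra hcon
      push_neg at hcon
      obtain ⟨h1, h2⟩ := hcon
      have heq : L j (a • x + b • y) = a * L j x + b * L j y := by
        simp only [hL, Finset.mul_sum, ← Finset.sum_add_distrib]
        refine Finset.sum_congr rfl fun k _ => ?_
        simp only [Pi.add_apply, Pi.smul_apply, smul_eq_mul]
        linear_combination (ξ j k * X j k) * hab
      have hposc : 0 < L j (a • x + b • y) := by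
        rw [heq]
        rcases ha.lt_or_eq with h | h
        · have hby : 0 ≤ b * L j y := mul_nonneg hb h2.le
          nlinarith
        · have hb1 : b = 1 := by linarith
          rw [← h, hb1]; simpa using h2
      linarith
    have hqc : ∀ x y : Fin d → ℝ, ∀ a b : ℝ, 0 ≤ a → 0 ≤ b → a + b = 1 →
        ψ (a • x + b • y) ≤ max (ψ x) (ψ y) := by
      intro x y a b ha hb hab
      have hsub := hmono x y a b ha hb hab
      have hsup : (T (a • x + b • y)).sup F ≤ (T x).sup F ⊔ (T y).sup F :=
        le_trans (Finset.sup_mono hsub) (le_of_eq Finset.sup_union)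
      simp only [hψdef]
      rcases le_total ((T x).sup F) ((T y).sup F) with h | h
      · have h3 : (T (a • x + b • y)).sup F ≤ (T y).sup F :=
          hsup.trans (sup_le h le_rfl)
        have h4 := add_le_add_left (NNReal.coe_le_coe.mpr h3) m
        exact h4.trans (le_max_right _ _)
      · have h3 : (T (a • x + b • y)).sup F ≤ (T x).sup F :=
          hsup.trans (sup_le le_rfl h)
        have h4 := add_le_add_left (NNReal.coe_le_coe.mpr h3) m
        exact h4.trans (le_max_left _ _)
    refine ⟨ψ, ?_, ?_⟩
    · intro α x hx y hy a b ha hb hab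
      have hle := hqc x y a b ha hb hab
      simp only [Set.mem_setOf_eq] at hx hy ⊢
      exact hle.trans (max_le hx hy)
    · intro i
      have hiT : i ∈ T (X i) := by
        simp [hT, hL]
      have hle : (T (X i)).sup F = F i := by
        apply le_antisymm
        · apply Finset.sup_le
          intro j hj
          simp only [hT, Finset.mem_filter, Finset.mem_univ, true_and] at hj
          have hzj : z j ≤ z i := by
            by_contra hcon
            push_neg at hcon
            have := hξ i j hcon
            simp only [hL] at hj
            linarith
          exact Real.toNNReal_mono (by linarith)
        · exact Finset.le_sup (f := F) hiT
      simp only [hψdef, hle, hF]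
      rw [show ((T (X i)).sup fun j => (z j - m).toNNReal) = (z i - m).toNNReal from hle, Real.coe_toNNReal _ (by linarith [hmle i])]
      ring
end

section
/- For n = 3 design points X₁ = (1,0), X₂ = (0.75, 0.75), X₃ = (0,1) in ℝ², the constraint set Q := {(ψ(X₁),ψ(X₂),ψ(X₃)) : ψ quasiconvex and decreasing} equals {z ∈ ℝ³ : z₂ ≤ max(z₁, z₃)}, and both (0.5, 0.5, 0) and (0, 0.5, 0.5) are Euclidean projections of the point (0, 1, 0) onto Q. In particular Q is not convex and Euclidean projection onto Q need not be unique. -/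
open Finset MeasureTheory

open scoped Classical

/-- A three-level step function built on nested convex upper sets is
quasiconvex and decreasing. -/
lemma step_lemma (U V : Set (Fin 2 → ℝ)) (hVU : V ⊆ U)
    (hU : Convex ℝ U) (hV : Convex ℝ V)
    (hUup : ∀ x y : Fin 2 → ℝ, x ≤ y → x ∈ U → y ∈ U)
    (hVup : ∀ x y : Fin 2 → ℝ, x ≤ y → x ∈ V → y ∈ V)
    (c₀ c₁ c₂ : ℝ) (h01 : c₁ ≤ c₀) (h12 : c₂ ≤ c₁) :
    QConv (fun x => if x ∈ V then c₂ else if x ∈ U then c₁ else c₀) ∧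
    Decr (fun x => if x ∈ V then c₂ else if x ∈ U then c₁ else c₀) := by
  have hle : ∀ t : Fin 2 → ℝ,
      (if t ∈ V then c₂ else if t ∈ U then c₁ else c₀) ≤ c₀ := by
    intro t; split_ifs <;> linarith
  constructor
  · intro α x hx y hy a b ha hb hab
    simp only [Set.mem_setOf_eq] at hx hy ⊢
    by_cases hxV : x ∈ V
    · by_cases hyV : y ∈ V
      · have hm : a • x + b • y ∈ V := hV hxV hyV ha hb hab
        have hx2 : c₂ ≤ α := by simpa [hxV] using hx
        simpa [hm] using hx2
      · by_cases hyU : y ∈ U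
        · have hm : a • x + b • y ∈ U := hU (hVU hxV) hyU ha hb hab
          have h1 : c₁ ≤ α := by simpa [hyV, hyU] using hy
          split_ifs with h <;> linarith
        · have h0 : c₀ ≤ α := by simpa [hyV, hyU] using hy
          exact le_trans (hle _) h0
    · by_cases hxU : x ∈ U
      · have h1 : c₁ ≤ α := by simpa [hxV, hxU] using hx
        by_cases hyV : y ∈ V
        · have hm : a • x + b • y ∈ U := hU hxU (hVU hyV) ha hb hab
          split_ifs with h <;> linarith
        · by_cases hyU : y ∈ U
          · have hm : a • x + b • y ∈ U := hU hxU hyU ha hb hab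
            split_ifs with h <;> linarith
          · have h0 : c₀ ≤ α := by simpa [hyV, hyU] using hy
            exact le_trans (hle _) h0
      · have h0 : c₀ ≤ α := by simpa [hxV, hxU] using hx
        exact le_trans (hle _) h0
  · intro x y hxy
    simp only
    by_cases hxV : x ∈ V
    · have hyV : y ∈ V := hVup x y hxy hxV
      simp [hxV, hyV]
    · by_cases hxU : x ∈ U
      · have hyU : y ∈ U := hUup x y hxy hxU
        rw [if_neg hxV, if_pos hxU]
        split_ifs <;> linarith
      · rw [if_neg hxV, if_neg hxU]
        exact hle y

lemma convex_hs (a₀ a₁ c : ℝ) : Convex ℝ {x : Fin 2 → ℝ | c ≤ a₀ * x 0 + a₁ * x 1} := by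
  intro x hx y hy a b ha hb hab
  have hb1 : b = 1 - a := by linarith
  subst hb1
  simp only [Set.mem_setOf_eq, Pi.add_apply, Pi.smul_apply, smul_eq_mul] at *
  nlinarith [mul_le_mul_of_nonneg_left hx ha, mul_le_mul_of_nonneg_left hy hb]

lemma convex_coord (i : Fin 2) (c : ℝ) : Convex ℝ {x : Fin 2 → ℝ | c ≤ x i} := by
  intro x hx y hy a b ha hb hab
  have hb1 : b = 1 - a := by linarith
  subst hb1
  simp only [Set.mem_setOf_eq, Pi.add_apply, Pi.smul_apply, smul_eq_mul] at *
  nlinarith [mul_le_mul_of_nonneg_left hx ha, mul_le_mul_of_nonneg_left hy hb]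

theorem stmt_11 :
    {z : Fin 3 → ℝ | ∃ ψ : (Fin 2 → ℝ) → ℝ, QConv ψ ∧ Decr ψ ∧
        ∀ i, z i = ψ (![![(1 : ℝ), 0], ![0.75, 0.75], ![0, 1]] i)} =
      {z : Fin 3 → ℝ | z 1 ≤ max (z 0) (z 2)} ∧
    (∀ p ∈ ({![(0.5 : ℝ), 0.5, 0], ![0, 0.5, 0.5]} : Set (Fin 3 → ℝ)),
      p ∈ {z : Fin 3 → ℝ | z 1 ≤ max (z 0) (z 2)} ∧
      ∀ w ∈ {z : Fin 3 → ℝ | z 1 ≤ max (z 0) (z 2)},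
        ∑ k, (![(0 : ℝ), 1, 0] k - p k) ^ 2 ≤ ∑ k, (![(0 : ℝ), 1, 0] k - w k) ^ 2) ∧
    ¬ Convex ℝ {z : Fin 3 → ℝ | z 1 ≤ max (z 0) (z 2)} := by
  refine ⟨?_, ?_, ?_⟩
  · ext z
    simp only [Set.mem_setOf_eq]
    constructor
    · rintro ⟨ψ, hq, hd, hz⟩
      have h0 := hz 0
      have h1 := hz 1
      have h2 := hz 2
      simp only [Matrix.cons_val_zero, Matrix.cons_val_one, Matrix.head_cons,
        Matrix.cons_val_two, Matrix.tail_cons] at h0 h1 h2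
      set α := max (z 0) (z 2) with hα
      have hX1 : ψ ![(1:ℝ), 0] ≤ α := by rw [← h0]; exact le_max_left _ _
      have hX3 : ψ ![(0:ℝ), 1] ≤ α := by rw [← h2]; exact le_max_right _ _
      have hm := hq α hX1 hX3 (by norm_num : (0:ℝ) ≤ 1/2) (by norm_num : (0:ℝ) ≤ 1/2)
        (by norm_num : (1:ℝ)/2 + 1/2 = 1)
      have hmid : (1/2 : ℝ) • ![(1:ℝ), 0] + (1/2 : ℝ) • ![(0:ℝ), 1] = ![(1/2 : ℝ), 1/2] := by
        funext i
        fin_cases i <;> simp <;> norm_num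
      rw [hmid] at hm
      simp only [Set.mem_setOf_eq] at hm
      have hle : (![(1/2 : ℝ), 1/2] : Fin 2 → ℝ) ≤ ![(0.75 : ℝ), 0.75] := by
        intro i
        fin_cases i <;> norm_num
      have := hd _ _ hle
      rw [h1]
      exact le_trans this hm
    · intro hz
      rcases le_total (z 2) (z 0) with hA | hB
      · have hz1 : z 1 ≤ z 0 := le_trans hz (by simp [hA])
        rcases le_total (z 2) (z 1) with hc | hc
        · -- z 2 ≤ z 1 ≤ z 0
          have key := step_lemma {x : Fin 2 → ℝ | 3 ≤ 1 * x 0 + 3 * x 1}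
            ({x : Fin 2 → ℝ | 1 ≤ x 1} ∩ {x : Fin 2 → ℝ | 3 ≤ 1 * x 0 + 3 * x 1})
            Set.inter_subset_right
            (convex_hs 1 3 3)
            ((convex_coord 1 1).inter (convex_hs 1 3 3))
            (by intro x y hxy hx; simp only [Set.mem_setOf_eq] at *
                have := hxy 0; have := hxy 1; linarith)
            (by rintro x y hxy ⟨hx1, hx2⟩
                simp only [Set.mem_setOf_eq] at hx1 hx2
                have := hxy 0; have := hxy 1
                exact ⟨by simp only [Set.mem_setOf_eq]; linarith,
                  by simp only [Set.mem_setOf_eq]; linarith⟩)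
            (z 0) (z 1) (z 2) hz1 hc
          refine ⟨_, key.1, key.2, ?_⟩
          intro i
          fin_cases i
          · show z 0 = _
            norm_num [Set.mem_inter_iff, Set.mem_setOf_eq, Matrix.cons_val_zero,
              Matrix.cons_val_one, Matrix.head_cons, Matrix.cons_val_two, Matrix.tail_cons]
          · show z 1 = _
            norm_num [Set.mem_inter_iff, Set.mem_setOf_eq, Matrix.cons_val_zero,
              Matrix.cons_val_one, Matrix.head_cons, Matrix.cons_val_two, Matrix.tail_cons]
          · show z 2 = _
            norm_num [Set.mem_inter_iff, Set.mem_setOf_eq, Matrix.cons_val_zero,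
              Matrix.cons_val_one, Matrix.head_cons, Matrix.cons_val_two, Matrix.tail_cons]
        · -- z 1 ≤ z 2 ≤ z 0
          have key := step_lemma {x : Fin 2 → ℝ | 3 ≤ 1 * x 0 + 3 * x 1}
            ({x : Fin 2 → ℝ | 3/4 ≤ x 0} ∩ {x : Fin 2 → ℝ | 3/4 ≤ x 1})
            (by rintro x ⟨hx1, hx2⟩
                simp only [Set.mem_setOf_eq] at hx1 hx2 ⊢; linarith)
            (convex_hs 1 3 3)
            ((convex_coord 0 _).inter (convex_coord 1 _))
            (by intro x y hxy hx; simp only [Set.mem_setOf_eq] at *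
                have := hxy 0; have := hxy 1; linarith)
            (by rintro x y hxy ⟨hx1, hx2⟩
                simp only [Set.mem_setOf_eq] at hx1 hx2
                have := hxy 0; have := hxy 1
                exact ⟨by simp only [Set.mem_setOf_eq]; linarith,
                  by simp only [Set.mem_setOf_eq]; linarith⟩)
            (z 0) (z 2) (z 1) hA hc
          refine ⟨_, key.1, key.2, ?_⟩
          intro i
          fin_cases i
          · show z 0 = _
            norm_num [Set.mem_inter_iff, Set.mem_setOf_eq, Matrix.cons_val_zero,
              Matrix.cons_val_one, Matrix.head_cons, Matrix.cons_val_two, Matrix.tail_cons]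
          · show z 1 = _
            norm_num [Set.mem_inter_iff, Set.mem_setOf_eq, Matrix.cons_val_zero,
              Matrix.cons_val_one, Matrix.head_cons, Matrix.cons_val_two, Matrix.tail_cons]
          · show z 2 = _
            norm_num [Set.mem_inter_iff, Set.mem_setOf_eq, Matrix.cons_val_zero,
              Matrix.cons_val_one, Matrix.head_cons, Matrix.cons_val_two, Matrix.tail_cons]
      · have hz1 : z 1 ≤ z 2 := le_trans hz (by simp [hB])
        rcases le_total (z 0) (z 1) with hc | hc
        · -- z 0 ≤ z 1 ≤ z 2
          have key := step_lemma {x : Fin 2 → ℝ | 3 ≤ 3 * x 0 + 1 * x 1}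
            ({x : Fin 2 → ℝ | 1 ≤ x 0} ∩ {x : Fin 2 → ℝ | 3 ≤ 3 * x 0 + 1 * x 1})
            Set.inter_subset_right
            (convex_hs 3 1 3)
            ((convex_coord 0 1).inter (convex_hs 3 1 3))
            (by intro x y hxy hx; simp only [Set.mem_setOf_eq] at *
                have := hxy 0; have := hxy 1; linarith)
            (by rintro x y hxy ⟨hx1, hx2⟩
                simp only [Set.mem_setOf_eq] at hx1 hx2
                have := hxy 0; have := hxy 1
                exact ⟨by simp only [Set.mem_setOf_eq]; linarith,
                  by simp only [Set.mem_setOf_eq]; linarith⟩)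
            (z 2) (z 1) (z 0) hz1 hc
          refine ⟨_, key.1, key.2, ?_⟩
          intro i
          fin_cases i
          · show z 0 = _
            norm_num [Set.mem_inter_iff, Set.mem_setOf_eq, Matrix.cons_val_zero,
              Matrix.cons_val_one, Matrix.head_cons, Matrix.cons_val_two, Matrix.tail_cons]
          · show z 1 = _
            norm_num [Set.mem_inter_iff, Set.mem_setOf_eq, Matrix.cons_val_zero,
              Matrix.cons_val_one, Matrix.head_cons, Matrix.cons_val_two, Matrix.tail_cons]
          · show z 2 = _
            norm_num [Set.mem_inter_iff, Set.mem_setOf_eq, Matrix.cons_val_zero,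
              Matrix.cons_val_one, Matrix.head_cons, Matrix.cons_val_two, Matrix.tail_cons]
        · -- z 1 ≤ z 0 ≤ z 2
          have key := step_lemma {x : Fin 2 → ℝ | 3 ≤ 3 * x 0 + 1 * x 1}
            ({x : Fin 2 → ℝ | 3/4 ≤ x 0} ∩ {x : Fin 2 → ℝ | 3/4 ≤ x 1})
            (by rintro x ⟨hx1, hx2⟩
                simp only [Set.mem_setOf_eq] at hx1 hx2 ⊢; linarith)
            (convex_hs 3 1 3)
            ((convex_coord 0 _).inter (convex_coord 1 _))
            (by intro x y hxy hx; simp only [Set.mem_setOf_eq] at *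
                have := hxy 0; have := hxy 1; linarith)
            (by rintro x y hxy ⟨hx1, hx2⟩
                simp only [Set.mem_setOf_eq] at hx1 hx2
                have := hxy 0; have := hxy 1
                exact ⟨by simp only [Set.mem_setOf_eq]; linarith,
                  by simp only [Set.mem_setOf_eq]; linarith⟩)
            (z 2) (z 0) (z 1) hB hc
          refine ⟨_, key.1, key.2, ?_⟩
          intro i
          fin_cases i
          · show z 0 = _
            norm_num [Set.mem_inter_iff, Set.mem_setOf_eq, Matrix.cons_val_zero,
              Matrix.cons_val_one, Matrix.head_cons, Matrix.cons_val_two, Matrix.tail_cons]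
          · show z 1 = _
            norm_num [Set.mem_inter_iff, Set.mem_setOf_eq, Matrix.cons_val_zero,
              Matrix.cons_val_one, Matrix.head_cons, Matrix.cons_val_two, Matrix.tail_cons]
          · show z 2 = _
            norm_num [Set.mem_inter_iff, Set.mem_setOf_eq, Matrix.cons_val_zero,
              Matrix.cons_val_one, Matrix.head_cons, Matrix.cons_val_two, Matrix.tail_cons]
  · intro p hp
    simp only [Set.mem_insert_iff, Set.mem_singleton_iff] at hp
    rcases hp with hp | hp <;> subst hp <;>
      refine ⟨by norm_num [Set.mem_setOf_eq, Matrix.cons_val_zero, Matrix.cons_val_one,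
        Matrix.head_cons, Matrix.cons_val_two, Matrix.tail_cons, le_max_iff], ?_⟩ <;>
      · intro w hw
        simp only [Set.mem_setOf_eq, le_max_iff] at hw
        rw [Fin.sum_univ_three, Fin.sum_univ_three]
        simp only [Matrix.cons_val_zero, Matrix.cons_val_one, Matrix.head_cons,
          Matrix.cons_val_two, Matrix.tail_cons]
        rcases hw with hw | hw <;> nlinarith [sq_nonneg (w 0 - 1 + w 1), sq_nonneg (w 2),
          sq_nonneg (w 2 - 1 + w 1), sq_nonneg (w 0), sq_nonneg (w 0 + 1 - w 1),
          sq_nonneg (w 2 + 1 - w 1)]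
  · intro hC
    have ha : (![(1:ℝ), 1, 0] : Fin 3 → ℝ) ∈ {z : Fin 3 → ℝ | z 1 ≤ max (z 0) (z 2)} := by
      norm_num [Set.mem_setOf_eq, Matrix.cons_val_zero, Matrix.cons_val_one,
        Matrix.head_cons, Matrix.cons_val_two, Matrix.tail_cons, le_max_iff]
    have hb : (![(0:ℝ), 1, 1] : Fin 3 → ℝ) ∈ {z : Fin 3 → ℝ | z 1 ≤ max (z 0) (z 2)} := by
      norm_num [Set.mem_setOf_eq, Matrix.cons_val_zero, Matrix.cons_val_one,
        Matrix.head_cons, Matrix.cons_val_two, Matrix.tail_cons, le_max_iff]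
    have := hC ha hb (by norm_num : (0:ℝ) ≤ 1/2) (by norm_num : (0:ℝ) ≤ 1/2)
      (by norm_num : (1:ℝ)/2 + 1/2 = 1)
    simp only [Set.mem_setOf_eq, Pi.add_apply, Pi.smul_apply, smul_eq_mul,
      Matrix.cons_val_zero, Matrix.cons_val_one, Matrix.head_cons,
      Matrix.cons_val_two, Matrix.tail_cons] at this
    norm_num at this
end

section
/- Let K ⊆ ℝⁿ be a closed set. Then the set of points u ∈ ℝⁿ whose Euclidean projection onto K is not unique has Lebesgue measure zero. Consequently, if Y ∈ ℝⁿ is a random vector with a density with respect to the Lebesgue measure on ℝⁿ, then the minimizer of z ↦ ‖Y − z‖₂² over K is unique with probability 1. -/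
open Finset MeasureTheory

open Metric in
/-- If the squared distance function to a closed set is differentiable at `u` (in the sense that
`infDist` is differentiable), then the nearest point in the set is unique. -/
lemma unique_proj_of_differentiable {n : ℕ} (K : Set (EuclideanSpace ℝ (Fin n)))
    (hK : IsClosed K) (hK' : K.Nonempty) (u : EuclideanSpace ℝ (Fin n))
    (hd : DifferentiableAt ℝ (fun v => infDist v K) u) :
    ∃! z : EuclideanSpace ℝ (Fin n), z ∈ K ∧ ∀ w ∈ K, dist u z ≤ dist u w := by
  obtain ⟨z₀, hz₀K, hz₀d⟩ := hK.exists_infDist_eq_dist hK' u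
  have hLz : ∀ z : EuclideanSpace ℝ (Fin n), z ∈ K → (∀ w ∈ K, dist u z ≤ dist u w) →
      (fderivInnerCLM ℝ ((u - z, u - z) : _ × _)).comp
        ((ContinuousLinearMap.id ℝ _).prod (ContinuousLinearMap.id ℝ _)) =
        fderiv ℝ (fun v => infDist v K ^ 2) u := by
    intro z hzK hzmin
    have hsub : HasFDerivAt (fun v : EuclideanSpace ℝ (Fin n) => v - z)
        (ContinuousLinearMap.id ℝ _) u := (hasFDerivAt_id u).sub_const z
    have hinner := hsub.inner ℝ hsub
    have hφ : DifferentiableAt ℝ (fun v => infDist v K ^ 2) u := hd.pow 2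
    have hψ : HasFDerivAt
        (fun v => (inner ℝ (v - z) (v - z) : ℝ) - infDist v K ^ 2)
        ((fderivInnerCLM ℝ ((u - z, u - z) : _ × _)).comp
          ((ContinuousLinearMap.id ℝ _).prod (ContinuousLinearMap.id ℝ _)) -
          fderiv ℝ (fun v => infDist v K ^ 2) u) u := hinner.sub hφ.hasFDerivAt
    have huz : infDist u K = dist u z := by
      refine le_antisymm (infDist_le_dist_of_mem hzK) ?_
      rw [hz₀d]; exact hzmin z₀ hz₀K
    have hnonneg : ∀ v, (0:ℝ) ≤ (inner ℝ (v - z) (v - z) : ℝ) - infDist v K ^ 2 := by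
      intro v
      have h1 : infDist v K ≤ dist v z := infDist_le_dist_of_mem hzK
      have h2 : infDist v K ^ 2 ≤ dist v z ^ 2 :=
        pow_le_pow_left₀ infDist_nonneg h1 2
      have h3 : (inner ℝ (v - z) (v - z) : ℝ) = dist v z ^ 2 := by
        rw [real_inner_self_eq_norm_sq, dist_eq_norm]
      linarith
    have hzero : (inner ℝ (u - z) (u - z) : ℝ) - infDist u K ^ 2 = 0 := by
      rw [real_inner_self_eq_norm_sq, huz, dist_eq_norm]; ring
    have hmin : IsLocalMin
        (fun v => (inner ℝ (v - z) (v - z) : ℝ) - infDist v K ^ 2) u :=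
      Filter.Eventually.of_forall fun v => hzero.trans_le (hnonneg v)
    have := hmin.hasFDerivAt_eq_zero hψ
    rwa [sub_eq_zero] at this
  refine ⟨z₀, ⟨hz₀K, fun w hw => by rw [← hz₀d]; exact infDist_le_dist_of_mem hw⟩, ?_⟩
  rintro z₁ ⟨hz₁K, hz₁min⟩
  have h1 := hLz z₁ hz₁K hz₁min
  have h2 := hLz z₀ hz₀K fun w hw => by rw [← hz₀d]; exact infDist_le_dist_of_mem hw
  have h12 := h1.trans h2.symm
  have happ := DFunLike.congr_fun h12 (z₀ - z₁)
  simp only [ContinuousLinearMap.comp_apply, ContinuousLinearMap.prod_apply,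
    ContinuousLinearMap.id_apply, fderivInnerCLM_apply] at happ
  have hin : (inner ℝ (z₀ - z₁) (z₀ - z₁) : ℝ) = 0 := by
    have e1 : (inner ℝ (u - z₁) (z₀ - z₁) : ℝ) = inner ℝ (u - z₀) (z₀ - z₁) := by
      have c1 := real_inner_comm (z₀ - z₁) (u - z₁)
      have c2 := real_inner_comm (z₀ - z₁) (u - z₀)
      linarith
    have := sub_eq_zero.mpr e1
    rw [← inner_sub_left] at this
    simpa [sub_sub_sub_cancel_left] using this
  have : z₀ - z₁ = 0 := inner_self_eq_zero.mp hin
  exact (sub_eq_zero.mp this).symm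

open Metric in
/-- The set of points with non-unique nearest point in a closed set is Lebesgue-null. -/
lemma null_nonunique {n : ℕ} (K : Set (EuclideanSpace ℝ (Fin n)))
    (hK : IsClosed K) (hK' : K.Nonempty) :
    volume {u : EuclideanSpace ℝ (Fin n) |
      ¬ ∃! z, z ∈ K ∧ ∀ w ∈ K, dist u z ≤ dist u w} = 0 := by
  have hlip : LipschitzWith 1 (fun v : EuclideanSpace ℝ (Fin n) => infDist v K) :=
    lipschitz_infDist_pt K
  refine measure_mono_null (fun u hu hdiff => hu (unique_proj_of_differentiable K hK hK' u hdiff))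
    (ae_iff.mp (hlip.ae_differentiableAt (μ := volume)))

theorem stmt_12 (n : ℕ) (K : Set (Fin n → ℝ)) (hK : IsClosed K)
    (hK' : K.Nonempty) :
    volume {u : Fin n → ℝ |
        ¬ ∃! z, z ∈ K ∧ ∀ w ∈ K, ∑ k, (u k - z k) ^ 2 ≤ ∑ k, (u k - w k) ^ 2} = 0 ∧
    ∀ μ : Measure (Fin n → ℝ), μ ≪ volume →
      μ {u : Fin n → ℝ |
          ¬ ∃! z, z ∈ K ∧ ∀ w ∈ K,
            ∑ k, (u k - z k) ^ 2 ≤ ∑ k, (u k - w k) ^ 2} = 0 := by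
  set e : EuclideanSpace ℝ (Fin n) ≃L[ℝ] (Fin n → ℝ) := EuclideanSpace.equiv (Fin n) ℝ
  set K' : Set (EuclideanSpace ℝ (Fin n)) := e ⁻¹' K with hK'def
  have hK'closed : IsClosed K' := hK.preimage e.continuous
  have hK'ne : K'.Nonempty := by
    obtain ⟨x, hx⟩ := hK'
    exact ⟨e.symm x, by simp [hK'def, hx]⟩
  have hcoord : ∀ (a : EuclideanSpace ℝ (Fin n)) (k : Fin n), e a k = a k := fun a k => rfl
  have hsq : ∀ (a b : EuclideanSpace ℝ (Fin n)),
      ∑ k, (e a k - e b k) ^ 2 = dist a b ^ 2 := by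
    intro a b
    rw [EuclideanSpace.dist_eq, Real.sq_sqrt (by positivity)]
    refine Finset.sum_congr rfl fun k _ => ?_
    rw [hcoord, hcoord, Real.dist_eq, sq_abs]
  have key : ∀ u : EuclideanSpace ℝ (Fin n),
      (∃! z : EuclideanSpace ℝ (Fin n), z ∈ K' ∧ ∀ w ∈ K', dist u z ≤ dist u w) →
      (∃! z, z ∈ K ∧ ∀ w ∈ K,
        ∑ k, (e u k - z k) ^ 2 ≤ ∑ k, (e u k - w k) ^ 2) := by
    rintro u ⟨z, ⟨hzK, hzmin⟩, huniq⟩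
    refine ⟨e z, ⟨hzK, ?_⟩, ?_⟩
    · intro w hw
      have hw' : e.symm w ∈ K' := by simp [hK'def, hw]
      have h2 := pow_le_pow_left₀ dist_nonneg (hzmin (e.symm w) hw') 2
      calc ∑ k, (e u k - e z k) ^ 2 = dist u z ^ 2 := hsq u z
        _ ≤ dist u (e.symm w) ^ 2 := h2
        _ = ∑ k, (e u k - e (e.symm w) k) ^ 2 := (hsq u (e.symm w)).symm
        _ = ∑ k, (e u k - w k) ^ 2 := by rw [e.apply_symm_apply]
    · intro y ⟨hyK, hymin⟩
      have hy' : e.symm y ∈ K' := by simp [hK'def, hyK]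
      have heq : e.symm y = z := by
        refine huniq _ ⟨hy', fun w hw => ?_⟩
        have hew : e w ∈ K := hw
        have h1 : ∑ k, (e u k - (e (e.symm y)) k) ^ 2 ≤ ∑ k, (e u k - (e w) k) ^ 2 := by
          rw [e.apply_symm_apply]; exact hymin (e w) hew
        have h1' : dist u (e.symm y) ^ 2 ≤ dist u w ^ 2 := by
          rw [← hsq u (e.symm y), ← hsq u w]; exact h1
        have h2 := Real.sqrt_le_sqrt h1'
        rwa [Real.sqrt_sq dist_nonneg, Real.sqrt_sq dist_nonneg] at h2
      rw [← heq, e.apply_symm_apply]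
  have hnull := null_nonunique K' hK'closed hK'ne
  have hvol : volume {u : Fin n → ℝ |
      ¬ ∃! z, z ∈ K ∧ ∀ w ∈ K, ∑ k, (u k - z k) ^ 2 ≤ ∑ k, (u k - w k) ^ 2} = 0 := by
    set S : Set (Fin n → ℝ) := {u : Fin n → ℝ |
      ¬ ∃! z, z ∈ K ∧ ∀ w ∈ K, ∑ k, (u k - z k) ^ 2 ≤ ∑ k, (u k - w k) ^ 2}
    have hmp := (EuclideanSpace.volume_preserving_symm_measurableEquiv_toLp (Fin n)).map_eq
    have : volume S = volume ((MeasurableEquiv.toLp 2 (Fin n → ℝ)).symm ⁻¹' S) := by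
      conv_lhs => rw [← hmp]
      rw [MeasurableEquiv.map_apply]
    rw [this]
    refine measure_mono_null ?_ hnull
    intro u hu
    simp only [Set.mem_preimage, Set.mem_setOf_eq] at hu ⊢
    intro h
    exact hu (key u h)
  exact ⟨hvol, fun μ hμ => hμ hvol⟩
end

section
/- Algorithm validity: a point z ∈ ℝⁿ satisfies z_i ≤ max_{j∈S} z_j for all pairs (i,S) with X_i ∈ Cv†({X_j : j ∈ S}) (i.e., z lies in the constraint set Q) if and only if for every i ∈ [n], X_i ∉ Cv†({X_j : z_j < z_i}). In other words, it suffices to check only the n subsets S_i = {j : z_j < z_i}. -/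
open Finset MeasureTheory

theorem stmt_13 (d n : ℕ) (X : Fin n → (Fin d → ℝ)) (z : Fin n → ℝ) :
    (∀ (i : Fin n) (S : Finset (Fin n)) (hS : S.Nonempty),
      X i ∈ CvDag (X '' ↑S) → z i ≤ S.sup' hS z) ↔
    (∀ i : Fin n, X i ∉ CvDag (X '' {j : Fin n | z j < z i})) := by
  constructor
  · intro h i hi
    set S : Finset (Fin n) := Finset.univ.filter (fun j => z j < z i) with hSdef
    have hss : X '' {j : Fin n | z j < z i} = X '' ↑S := by
      congr 1; ext j; simp [hSdef]
    rw [hss] at hi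
    have hne : S.Nonempty := by
      by_contra hn
      rw [Finset.not_nonempty_iff_eq_empty] at hn
      rw [hn] at hi
      simp [CvDag, UpOrth] at hi
    have h1 := h i S hne hi
    have hlt : S.sup' hne z < z i := by
      apply (Finset.sup'_lt_iff hne).mpr
      intro j hj
      simpa [hSdef] using hj
    linarith
  · intro h i S hS hi
    by_contra hle
    push_neg at hle
    apply h i
    have hsub : X '' ↑S ⊆ X '' {j : Fin n | z j < z i} := by
      apply Set.image_mono
      intro j hj
      exact lt_of_le_of_lt (Finset.le_sup' z hj) hle
    obtain ⟨x, hx, hxy⟩ := hi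
    exact ⟨x, convexHull_mono hsub hx, hxy⟩
end

section
/- If the constraint set Q ⊆ ℝⁿ contains all constant vectors and is closed under coordinatewise maximum truncation (i.e., z ∈ Q implies the vector with coordinates min(max(z_i, −c), c) is in Q for every c > 0), then the unconstrained least squares minimizer over the quasiconvex function class with no bound equals the minimizer over the class bounded by Γ = max_i |Y_i|: argmin over all quasiconvex functions g of Σ(Y_i − g(X_i))² equals argmin over quasiconvex functions bounded by max_i|Y_i| of the same criterion. In particular, any LSE z over Q satisfies max_i |z_i| ≤ max_i |Y_i|. -/
open Finset MeasureTheory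

lemma trunc_closer (c y z : ℝ) (hyc : |y| ≤ c) :
    |y - min (max z (-c)) c| ≤ |y - z| := by
  obtain ⟨h1, h2⟩ := abs_le.mp hyc
  rcases le_or_gt z (-c) with h | h
  · rw [max_eq_right h, min_eq_left (by linarith)]
    rw [abs_of_nonneg (by linarith), abs_of_nonneg (by linarith)]; linarith
  rcases le_or_gt c z with h' | h'
  · rw [max_eq_left (by linarith), min_eq_right h']
    rw [abs_of_nonpos (by linarith), abs_of_nonpos (by linarith)]; linarith
  · rw [max_eq_left h.le, min_eq_left h'.le]

lemma trunc_closer_lt (c y z : ℝ) (hyc : |y| ≤ c) (hcz : c < |z|) :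
    |y - min (max z (-c)) c| < |y - z| := by
  obtain ⟨h1, h2⟩ := abs_le.mp hyc
  rcases lt_abs.mp hcz with h | h
  · rw [max_eq_left (by linarith), min_eq_right h.le]
    rw [abs_of_nonpos (by linarith), abs_of_nonpos (by linarith)]; linarith
  · rw [max_eq_right (by linarith), min_eq_left (by linarith)]
    rw [abs_of_nonneg (by linarith), abs_of_nonneg (by linarith)]; linarith

lemma trunc_sq_le (c y z : ℝ) (hyc : |y| ≤ c) :
    (y - min (max z (-c)) c) ^ 2 ≤ (y - z) ^ 2 := by
  rw [← sq_abs (y - min (max z (-c)) c), ← sq_abs (y - z)]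
  exact pow_le_pow_left₀ (abs_nonneg _) (trunc_closer c y z hyc) 2

lemma trunc_sq_lt (c y z : ℝ) (hyc : |y| ≤ c) (hcz : c < |z|) :
    (y - min (max z (-c)) c) ^ 2 < (y - z) ^ 2 := by
  rw [← sq_abs (y - min (max z (-c)) c), ← sq_abs (y - z)]
  exact pow_lt_pow_left₀ (trunc_closer_lt c y z hyc hcz) (abs_nonneg _) two_ne_zero

theorem stmt_16 (n : ℕ) (hn : 0 < n) (Q : Set (Fin n → ℝ)) (Y : Fin n → ℝ)
    (hconst : ∀ c : ℝ, (fun _ => c) ∈ Q)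
    (htrunc : ∀ z ∈ Q, ∀ c : ℝ, 0 < c →
      (fun i => min (max (z i) (-c)) c) ∈ Q) :
    {z | z ∈ Q ∧ ∀ w ∈ Q, ∑ k, (Y k - z k) ^ 2 ≤ ∑ k, (Y k - w k) ^ 2} =
      {z | z ∈ Q ∧ (∀ i, |z i| ≤ ⨆ i, |Y i|) ∧
        ∀ w ∈ Q, (∀ i, |w i| ≤ ⨆ i, |Y i|) →
          ∑ k, (Y k - z k) ^ 2 ≤ ∑ k, (Y k - w k) ^ 2} ∧
    ∀ z ∈ Q, (∀ w ∈ Q, ∑ k, (Y k - z k) ^ 2 ≤ ∑ k, (Y k - w k) ^ 2) →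
      ∀ i, |z i| ≤ ⨆ i, |Y i| := by
  haveI : Nonempty (Fin n) := ⟨⟨0, hn⟩⟩
  set Γ := ⨆ i, |Y i| with hΓdef
  have hbdd : BddAbove (Set.range fun i => |Y i|) := (Set.finite_range _).bddAbove
  have hY : ∀ k, |Y k| ≤ Γ := fun k => le_ciSup hbdd k
  have hΓ0 : 0 ≤ Γ := le_trans (abs_nonneg _) (hY ⟨0, hn⟩)
  have main : ∀ z ∈ Q, (∀ w ∈ Q, ∑ k, (Y k - z k) ^ 2 ≤ ∑ k, (Y k - w k) ^ 2) →
      ∀ i, |z i| ≤ Γ := by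
    intro z hz hmin i
    by_contra hlt
    push_neg at hlt
    set c := (Γ + |z i|) / 2 with hc
    have hc1 : Γ < c := by rw [hc]; linarith
    have hc2 : c < |z i| := by rw [hc]; linarith
    have hcpos : 0 < c := lt_of_le_of_lt hΓ0 hc1
    have hw : (fun j => min (max (z j) (-c)) c) ∈ Q := htrunc z hz c hcpos
    have hsum : ∑ k, (Y k - min (max (z k) (-c)) c) ^ 2 < ∑ k, (Y k - z k) ^ 2 := by
      apply Finset.sum_lt_sum
      · intro k _
        exact trunc_sq_le c (Y k) (z k) ((hY k).trans hc1.le)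
      · exact ⟨i, Finset.mem_univ i, trunc_sq_lt c (Y i) (z i) ((hY i).trans hc1.le) hc2⟩
    exact absurd (hmin _ hw) (not_le.mpr hsum)
  constructor
  · ext z
    simp only [Set.mem_setOf_eq]
    constructor
    · rintro ⟨hz, hmin⟩
      exact ⟨hz, main z hz hmin, fun w hw _ => hmin w hw⟩
    · rintro ⟨hz, hbz, hmin⟩
      refine ⟨hz, fun w hw => ?_⟩
      rcases lt_or_eq_of_le hΓ0 with hΓpos | hΓ0'
      · have hw' : (fun j => min (max (w j) (-Γ)) Γ) ∈ Q := htrunc w hw Γ hΓpos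
        have hbw' : ∀ j, |min (max (w j) (-Γ)) Γ| ≤ Γ := by
          intro j
          rw [abs_le]
          exact ⟨le_min (le_max_right _ _) (by linarith), min_le_right _ _⟩
        calc ∑ k, (Y k - z k) ^ 2 ≤ ∑ k, (Y k - min (max (w k) (-Γ)) Γ) ^ 2 :=
              hmin _ hw' hbw'
          _ ≤ ∑ k, (Y k - w k) ^ 2 :=
              Finset.sum_le_sum fun k _ => trunc_sq_le Γ (Y k) (w k) (hY k)
      · have hz0 : ∀ k, Y k - z k = 0 := by
          intro k
          have h1 : |Y k| ≤ 0 := hΓ0' ▸ hY k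
          have h2 : |z k| ≤ 0 := hΓ0' ▸ hbz k
          have := abs_nonneg (Y k)
          have := abs_nonneg (z k)
          have : Y k = 0 := abs_eq_zero.mp (le_antisymm h1 (abs_nonneg _))
          have : z k = 0 := abs_eq_zero.mp (le_antisymm h2 (abs_nonneg _))
          simp_all
        calc ∑ k, (Y k - z k) ^ 2 = 0 := by simp [hz0]
          _ ≤ ∑ k, (Y k - w k) ^ 2 := Finset.sum_nonneg fun k _ => sq_nonneg _
  · exact main
end

section
/- Suppose X₁,…,Xₙ ∈ ℝ^d are distinct points lying on the set {x ∈ ℝ^d : x ≤ 0 coordinatewise and ‖x‖ = 1}. Then for every i ∈ [n] and S ⊆ [n] with i ∉ S, X_i ∉ Cv†({X_j : j ∈ S}); consequently the constraint set Q of restrictions of quasiconvex decreasing functions equals all of ℝⁿ. -/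
open Finset MeasureTheory

theorem stmt_18 (d n : ℕ) (X : Fin n → (Fin d → ℝ))
    (hinj : Function.Injective X)
    (hneg : ∀ j, X j ≤ 0)
    (hnorm : ∀ j, Real.sqrt (∑ i, (X j i) ^ 2) = 1) :
    (∀ (i : Fin n) (S : Finset (Fin n)), i ∉ S → X i ∉ CvDag (X '' ↑S)) ∧
    {z : Fin n → ℝ | ∀ (i : Fin n) (S : Finset (Fin n)) (hS : S.Nonempty),
        X i ∈ CvDag (X '' ↑S) → z i ≤ S.sup' hS z} = Set.univ := by
  have hsq : ∀ j, (∑ i, (X j i) ^ 2) = 1 := by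
    intro j
    have h := hnorm j
    have hnn : (0:ℝ) ≤ ∑ i, (X j i) ^ 2 :=
      Finset.sum_nonneg fun i _ => sq_nonneg _
    nlinarith [Real.sq_sqrt hnn]
  have key : ∀ (i : Fin n) (S : Finset (Fin n)), i ∉ S → X i ∉ CvDag (X '' ↑S) := by
    intro i S hiS hmem
    obtain ⟨x, hx, hle⟩ := hmem
    -- halfspace
    set L : (Fin d → ℝ) → ℝ := fun y => ∑ k, X i k * y k with hL
    have hlin : IsLinearMap ℝ L := by
      constructor
      · intro a b
        simp [hL, mul_add, Finset.sum_add_distrib]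
      · intro c a
        simp [hL, Finset.mul_sum]
        ring_nf
        simp [mul_comm, mul_assoc, mul_left_comm]
    have hconv : Convex ℝ {y : Fin d → ℝ | L y < 1} := convex_halfSpace_lt hlin 1
    have hsub : X '' ↑S ⊆ {y : Fin d → ℝ | L y < 1} := by
      rintro _ ⟨j, hj, rfl⟩
      have hj' : j ∈ S := hj
      have hne : X i ≠ X j := fun h => hiS (hinj h ▸ hj')
      obtain ⟨k, hk⟩ := Function.ne_iff.mp hne
      have hpos : 0 < ∑ m, (X i m - X j m) ^ 2 := by
        apply Finset.sum_pos' (fun m _ => sq_nonneg _)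
        exact ⟨k, Finset.mem_univ k, pow_two_pos_of_ne_zero (sub_ne_zero.mpr hk)⟩
      have hexp : ∑ m, (X i m - X j m) ^ 2
          = (∑ m, (X i m) ^ 2) - 2 * (∑ m, X i m * X j m) + ∑ m, (X j m) ^ 2 := by
        rw [Finset.mul_sum, ← Finset.sum_sub_distrib, ← Finset.sum_add_distrib]
        exact Finset.sum_congr rfl fun m _ => by ring
      have := hsq i
      have := hsq j
      show L (X j) < 1
      simp only [hL]
      nlinarith
    have hxlt : L x < 1 := convexHull_min hsub hconv hx
    have hge : (1:ℝ) ≤ L x := by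
      have : ∀ k, X i k * X i k ≤ X i k * x k := by
        intro k
        exact mul_le_mul_of_nonpos_left (hle k) (by simpa using hneg i k)
      calc (1:ℝ) = ∑ k, (X i k)^2 := (hsq i).symm
        _ = ∑ k, X i k * X i k := by simp [sq]
        _ ≤ ∑ k, X i k * x k := Finset.sum_le_sum fun k _ => this k
    linarith
  refine ⟨key, ?_⟩
  ext z
  simp only [Set.mem_setOf_eq, Set.mem_univ, iff_true]
  intro i S hS hmem
  by_cases hi : i ∈ S
  · exact Finset.le_sup' z hi
  · exact absurd hmem (key i S hi)
end
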